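/- There exists a universal constant C > 0 such that the following holds. Let f : {-1,1}^n → {0,1} be a Boolean function computed by a decision tree of depth at most d, and let p = Pr_{x uniform in {-1,1}^n}[f(x)=1], with p > 0. Then ∑_{i=1}^{n} |f̂({i})| ≤ C · √d · p · √(ln(e/p)). -/

import Mathlib

open scoped BigOperators

/-- A deterministic decision tree over variables indexed by `α`:
each internal node queries a variable (the first subtree is followed when the
variable equals `-1`, i.e. `false`, the second when it equals `1`, i.e. `true`),
and each leaf is labeled by `0` or `1` (encoded as a `Bool`). -/
inductive DTree (α : Type) : Type where
  | leaf : Bool → DTree α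
  | node : α → DTree α → DTree α → DTree α

namespace DTree

/-- Evaluation of a decision tree on an input in `{-1,1}^α`, encoded as a
function `α → Bool` (`true` stands for `1`, `false` for `-1`); the output
`{0,1}` is given as a real number. -/
def eval {α : Type} : DTree α → (α → Bool) → ℝ
  | leaf b, _ => if b then 1 else 0
  | node i t0 t1, x => if x i then t1.eval x else t0.eval x

/-- Depth of a decision tree: the maximal number of internal nodes on a
root-to-leaf path. -/
def depth {α : Type} : DTree α → ℕ
  | leaf _ => 0
  | node _ t0 t1 => 1 + max t0.depth t1.depth

end DTree

/-- The Fourier coefficient `f̂(S) = 2^{-n} ∑_{x ∈ {-1,1}^n} f(x) ∏_{i ∈ S} x_i`,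
for `f` on `{-1,1}^α` encoded as a function on `α → Bool`. -/
noncomputable def booleanFourierCoeff {α : Type} [Fintype α] [DecidableEq α]
    (f : (α → Bool) → ℝ) (S : Finset α) : ℝ :=
  (∑ x : α → Bool, f x * ∏ i ∈ S, (if x i then (1 : ℝ) else -1)) / 2 ^ Fintype.card α

/-- The average of `f` over the uniform distribution on `{-1,1}^α`;
for `{0,1}`-valued `f` this is `Pr[f(x) = 1]`. -/
noncomputable def uavg {α : Type} [Fintype α] [DecidableEq α]
    (f : (α → Bool) → ℝ) : ℝ :=
  (∑ x : α → Bool, f x) / 2 ^ Fintype.card α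

namespace LevelOne

variable {n : ℕ}

def chi (b : Bool) : ℝ := if b then 1 else -1

def patch (ρ : Fin n → Option Bool) (y : Fin n → Bool) : Fin n → Bool :=
  fun i => (ρ i).getD (y i)

noncomputable def PS (σ : Fin n → ℝ) : DTree (Fin n) → (Fin n → Option Bool) → (Fin n → Bool) → ℝ
  | .leaf _, _, _ => 0
  | .node i t0 t1, ρ, y =>
    if ρ i = none then
      σ i * chi (y i) +
        (if y i then PS σ t1 (Function.update ρ i (some true)) y
         else PS σ t0 (Function.update ρ i (some false)) y)
    else (if ρ i = some true then PS σ t1 ρ y else PS σ t0 ρ y)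

noncomputable def Lf (σ : Fin n → ℝ) (ρ : Fin n → Option Bool) (y : Fin n → Bool) : ℝ :=
  ∑ i, if ρ i = none then σ i * chi (y i) else 0

/-- the involution flipping coordinate `i`. -/
def flipE (i : Fin n) : (Fin n → Bool) ≃ (Fin n → Bool) where
  toFun y := Function.update y i (!(y i))
  invFun y := Function.update y i (!(y i))
  left_inv y := by
    simp [Function.update_idem]
  right_inv y := by
    simp [Function.update_idem]

lemma flipE_apply_self (i : Fin n) (y : Fin n → Bool) : (flipE i y) i = !(y i) := by
  simp [flipE]

lemma sum_chi (i : Fin n) : ∑ y : Fin n → Bool, chi (y i) = 0 := by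
  have h := Equiv.sum_comp (flipE i) (fun y => chi (y i))
  have h2 : ∀ y : Fin n → Bool, chi ((flipE i y) i) = -chi (y i) := by
    intro y
    rw [flipE_apply_self]
    cases y i <;> simp [chi]
  rw [Finset.sum_congr rfl (fun y _ => h2 y)] at h
  rw [Finset.sum_neg_distrib] at h
  linarith

lemma sum_ite_true (i : Fin n) (H : (Fin n → Bool) → ℝ)
    (hH : ∀ y b, H (Function.update y i b) = H y) :
    ∑ y : Fin n → Bool, (if y i then H y else 0) = (∑ y : Fin n → Bool, H y) / 2 := by
  have h := Equiv.sum_comp (flipE i) (fun y => if y i then H y else 0)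
  have h2 : ∀ y : Fin n → Bool, (if (flipE i y) i then H (flipE i y) else 0)
      = (if y i then 0 else H y) := by
    intro y
    rw [flipE_apply_self]
    have : H (flipE i y) = H y := hH y _
    cases y i <;> simp [this]
  rw [Finset.sum_congr rfl (fun y _ => h2 y)] at h
  have h3 : ∑ y : Fin n → Bool, H y
      = ∑ y : Fin n → Bool, ((if y i then H y else 0) + (if y i then 0 else H y)) := by
    refine Finset.sum_congr rfl (fun y _ => ?_)
    cases y i <;> simp
  rw [Finset.sum_add_distrib, ← h] at h3
  linarith

lemma sum_split (i : Fin n) (F G1 G0 : (Fin n → Bool) → ℝ)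
    (h1 : ∀ y, y i = true → F y = G1 y) (h0 : ∀ y, y i = false → F y = G0 y)
    (inv1 : ∀ y b, G1 (Function.update y i b) = G1 y)
    (inv0 : ∀ y b, G0 (Function.update y i b) = G0 y) :
    ∑ y : Fin n → Bool, F y
      = ((∑ y : Fin n → Bool, G1 y) + (∑ y : Fin n → Bool, G0 y)) / 2 := by
  have hF : ∀ y : Fin n → Bool, F y
      = (if y i then G1 y else 0) + (if y i then 0 else G0 y) := by
    intro y
    cases h : y i
    · simp [h0 y h]
    · simp [h1 y h]
  have hfalse : ∑ y : Fin n → Bool, (if y i then (0:ℝ) else G0 y)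
      = (∑ y : Fin n → Bool, G0 y) / 2 := by
    have h := Equiv.sum_comp (flipE i) (fun y => if y i then (0:ℝ) else G0 y)
    have h2 : ∀ y : Fin n → Bool, (if (flipE i y) i then (0:ℝ) else G0 (flipE i y))
        = (if y i then G0 y else 0) := by
      intro y
      rw [flipE_apply_self]
      have : G0 (flipE i y) = G0 y := inv0 y _
      cases y i <;> simp [this]
    rw [Finset.sum_congr rfl (fun y _ => h2 y)] at h
    rw [← h]
    exact sum_ite_true i G0 inv0
  rw [Finset.sum_congr rfl (fun y _ => hF y), Finset.sum_add_distrib,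
    sum_ite_true i G1 inv1, hfalse]
  ring


lemma patch_update (ρ : Fin n → Option Bool) (i : Fin n) (h : ρ i ≠ none)
    (y : Fin n → Bool) (c : Bool) : patch ρ (Function.update y i c) = patch ρ y := by
  funext j
  by_cases hj : j = i
  · subst hj
    obtain ⟨a, ha⟩ := Option.ne_none_iff_exists'.mp h
    simp [patch, ha]
  · simp [patch, Function.update_of_ne hj]

lemma Lf_update (σ : Fin n → ℝ) (ρ : Fin n → Option Bool) (i : Fin n) (h : ρ i ≠ none)
    (y : Fin n → Bool) (c : Bool) : Lf σ ρ (Function.update y i c) = Lf σ ρ y := by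
  unfold Lf
  refine Finset.sum_congr rfl (fun j _ => ?_)
  by_cases hj : j = i
  · subst hj; simp [h]
  · simp [Function.update_of_ne hj]

lemma PS_update (σ : Fin n → ℝ) (i : Fin n) :
    ∀ (t : DTree (Fin n)) (ρ : Fin n → Option Bool), ρ i ≠ none →
      ∀ (y : Fin n → Bool) (c : Bool), PS σ t ρ (Function.update y i c) = PS σ t ρ y := by
  intro t
  induction t with
  | leaf b => intro ρ h y c; simp [PS]
  | node j t0 t1 ih0 ih1 =>
    intro ρ h y c
    by_cases hρj : ρ j = none
    · have hji : j ≠ i := fun hh => h (hh ▸ hρj)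
      have hy : Function.update y i c j = y j := Function.update_of_ne hji c y
      have h1 : Function.update ρ j (some true) i ≠ none := by
        rw [Function.update_of_ne (Ne.symm hji)]; exact h
      have h0 : Function.update ρ j (some false) i ≠ none := by
        rw [Function.update_of_ne (Ne.symm hji)]; exact h
      simp only [PS, hρj, if_pos rfl, hy]
      rw [ih1 _ h1 y c, ih0 _ h0 y c]
      simp
    · obtain ⟨a, ha⟩ := Option.ne_none_iff_exists'.mp hρj
      cases a with
      | true => simpa [PS, ha] using ih1 ρ h y c
      | false => simpa [PS, ha] using ih0 ρ h y c

lemma Lf_split (σ : Fin n → ℝ) (ρ : Fin n → Option Bool) (i : Fin n) (h : ρ i = none)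
    (b : Bool) (y : Fin n → Bool) :
    Lf σ ρ y = σ i * chi (y i) + Lf σ (Function.update ρ i (some b)) y := by
  unfold Lf
  rw [Fintype.sum_eq_add_sum_compl i, Fintype.sum_eq_add_sum_compl i
    (fun j => if Function.update ρ i (some b) j = none then σ j * chi (y j) else 0)]
  have h1 : (if ρ i = none then σ i * chi (y i) else 0) = σ i * chi (y i) := if_pos h
  have h2 : (if Function.update ρ i (some b) i = none then σ i * chi (y i) else 0) = 0 := by
    simp
  have h3 : (∑ j ∈ ({i}ᶜ : Finset (Fin n)), if ρ j = none then σ j * chi (y j) else 0)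
      = ∑ j ∈ ({i}ᶜ : Finset (Fin n)),
          if Function.update ρ i (some b) j = none then σ j * chi (y j) else 0 := by
    refine Finset.sum_congr rfl (fun j hj => ?_)
    have hji : j ≠ i := by simpa using hj
    rw [Function.update_of_ne hji]
  rw [h1, h2, h3]
  ring


lemma L1 (σ : Fin n → ℝ) :
    ∀ (t : DTree (Fin n)) (ρ : Fin n → Option Bool),
      ∑ y : Fin n → Bool, t.eval (patch ρ y) * Lf σ ρ y
        = ∑ y : Fin n → Bool, t.eval (patch ρ y) * PS σ t ρ y := by
  intro t
  induction t with
  | leaf b =>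
    intro ρ
    have hLf : ∑ y : Fin n → Bool, Lf σ ρ y = 0 := by
      unfold Lf
      rw [Finset.sum_comm]
      refine Finset.sum_eq_zero (fun i _ => ?_)
      by_cases h : ρ i = none
      · simp [h, ← Finset.mul_sum, sum_chi]
      · simp [h]
    simp only [PS, mul_zero, Finset.sum_const_zero]
    cases b
    · simp [DTree.eval]
    · simpa [DTree.eval] using hLf
  | node i t0 t1 ih0 ih1 =>
    intro ρ
    by_cases hρ : ρ i = none
    · set ρ1 := Function.update ρ i (some true) with hρ1
      set ρ0 := Function.update ρ i (some false) with hρ0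
      have hρ1i : ρ1 i ≠ none := by simp [hρ1]
      have hρ0i : ρ0 i ≠ none := by simp [hρ0]
      have hp1 : ∀ y : Fin n → Bool, y i = true → patch ρ y = patch ρ1 y := by
        intro y hy; funext j
        by_cases hj : j = i
        · subst hj; simp [patch, hρ, hy, hρ1]
        · simp [patch, hρ1, Function.update_of_ne hj]
      have hp0 : ∀ y : Fin n → Bool, y i = false → patch ρ y = patch ρ0 y := by
        intro y hy; funext j
        by_cases hj : j = i
        · subst hj; simp [patch, hρ, hy, hρ0]
        · simp [patch, hρ0, Function.update_of_ne hj]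
      have hpi : ∀ y : Fin n → Bool, patch ρ y i = y i := by
        intro y; simp [patch, hρ]
      have eL := sum_split i
        (fun y => DTree.eval (DTree.node i t0 t1) (patch ρ y) * Lf σ ρ y)
        (fun y => DTree.eval t1 (patch ρ1 y) * (σ i + Lf σ ρ1 y))
        (fun y => DTree.eval t0 (patch ρ0 y) * (-σ i + Lf σ ρ0 y))
        (by
          intro y hy
          simp only [DTree.eval, hpi y, hy, if_true]
          rw [hp1 y hy, Lf_split σ ρ i hρ true y, hy]
          simp [chi, ← hρ1])
        (by
          intro y hy
          simp only [DTree.eval, hpi y, hy]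
          rw [hp0 y hy, Lf_split σ ρ i hρ false y, hy]
          simp [chi, ← hρ0])
        (by
          intro y b
          simp only [patch_update ρ1 i hρ1i, Lf_update σ ρ1 i hρ1i])
        (by
          intro y b
          simp only [patch_update ρ0 i hρ0i, Lf_update σ ρ0 i hρ0i])
      have eP := sum_split i
        (fun y => DTree.eval (DTree.node i t0 t1) (patch ρ y) * PS σ (DTree.node i t0 t1) ρ y)
        (fun y => DTree.eval t1 (patch ρ1 y) * (σ i + PS σ t1 ρ1 y))
        (fun y => DTree.eval t0 (patch ρ0 y) * (-σ i + PS σ t0 ρ0 y))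
        (by
          intro y hy
          simp only [DTree.eval, PS, hpi y, hy, if_true, hρ, if_pos rfl]
          rw [hp1 y hy]
          simp [chi, hy, ← hρ1]
        )
        (by
          intro y hy
          simp only [DTree.eval, PS, hpi y, hy, hρ, if_pos rfl]
          rw [hp0 y hy]
          simp [chi, hy, ← hρ0]
        )
        (by
          intro y b
          simp only [patch_update ρ1 i hρ1i, PS_update σ i t1 ρ1 hρ1i])
        (by
          intro y b
          simp only [patch_update ρ0 i hρ0i, PS_update σ i t0 ρ0 hρ0i])
      rw [eL, eP]
      have k1 : ∑ y : Fin n → Bool, DTree.eval t1 (patch ρ1 y) * (σ i + Lf σ ρ1 y)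
          = ∑ y : Fin n → Bool, DTree.eval t1 (patch ρ1 y) * (σ i + PS σ t1 ρ1 y) := by
        simp only [mul_add, Finset.sum_add_distrib]
        rw [ih1 ρ1]
      have k0 : ∑ y : Fin n → Bool, DTree.eval t0 (patch ρ0 y) * (-σ i + Lf σ ρ0 y)
          = ∑ y : Fin n → Bool, DTree.eval t0 (patch ρ0 y) * (-σ i + PS σ t0 ρ0 y) := by
        simp only [mul_add, Finset.sum_add_distrib]
        rw [ih0 ρ0]
      rw [k1, k0]
    · obtain ⟨a, ha⟩ := Option.ne_none_iff_exists'.mp hρ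
      have hpa : ∀ y : Fin n → Bool, patch ρ y i = a := by
        intro y; simp [patch, ha]
      cases a with
      | true =>
        simp only [DTree.eval, PS, hpa, ha, if_true]
        simpa using ih1 ρ
      | false =>
        simp only [DTree.eval, PS, hpa, ha]
        simpa using ih0 ρ


lemma eval01 : ∀ (t : DTree (Fin n)) (x : Fin n → Bool), t.eval x = 0 ∨ t.eval x = 1 := by
  intro t
  induction t with
  | leaf b => intro x; cases b <;> simp [DTree.eval]
  | node i t0 t1 ih0 ih1 =>
    intro x
    cases h : x i <;> simp [DTree.eval, h]
    · exact ih0 x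
    · exact ih1 x

lemma L2 (σ : Fin n → ℝ) (hσ : ∀ i, σ i = 1 ∨ σ i = -1) (lam : ℝ) :
    ∀ (t : DTree (Fin n)) (ρ : Fin n → Option Bool),
      ∑ y : Fin n → Bool, Real.exp (lam * PS σ t ρ y)
        ≤ (2:ℝ) ^ n * Real.cosh lam ^ t.depth := by
  intro t
  induction t with
  | leaf b =>
    intro ρ
    simp [PS, DTree.depth, Finset.card_univ]
  | node i t0 t1 ih0 ih1 =>
    intro ρ
    have hcosh : (1:ℝ) ≤ Real.cosh lam := Real.one_le_cosh lam
    have hd1 : t1.depth ≤ (DTree.node i t0 t1).depth := by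
      simp [DTree.depth]; omega
    have hd0 : t0.depth ≤ (DTree.node i t0 t1).depth := by
      simp [DTree.depth]; omega
    by_cases hρ : ρ i = none
    · set ρ1 := Function.update ρ i (some true) with hρ1
      set ρ0 := Function.update ρ i (some false) with hρ0
      have hρ1i : ρ1 i ≠ none := by simp [hρ1]
      have hρ0i : ρ0 i ≠ none := by simp [hρ0]
      have eE := sum_split i
        (fun y => Real.exp (lam * PS σ (DTree.node i t0 t1) ρ y))
        (fun y => Real.exp (lam * σ i) * Real.exp (lam * PS σ t1 ρ1 y))
        (fun y => Real.exp (-(lam * σ i)) * Real.exp (lam * PS σ t0 ρ0 y))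
        (by
          intro y hy
          simp only [PS, hρ, if_pos rfl, hy, if_true, chi, ← hρ1]
          rw [← Real.exp_add]
          ring_nf)
        (by
          intro y hy
          simp only [PS, hρ, if_pos rfl, hy, chi, ← hρ0]
          norm_num
          rw [← Real.exp_add]
          ring_nf)
        (by
          intro y b
          simp only [PS_update σ i t1 ρ1 hρ1i])
        (by
          intro y b
          simp only [PS_update σ i t0 ρ0 hρ0i])
      rw [eE]
      have b1 : ∑ y : Fin n → Bool, Real.exp (lam * σ i) * Real.exp (lam * PS σ t1 ρ1 y)
          ≤ Real.exp (lam * σ i) * ((2:ℝ) ^ n * Real.cosh lam ^ max t0.depth t1.depth) := by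
        rw [← Finset.mul_sum]
        refine mul_le_mul_of_nonneg_left ?_ (Real.exp_pos _).le
        refine (ih1 ρ1).trans ?_
        refine mul_le_mul_of_nonneg_left ?_ (by positivity)
        exact pow_le_pow_right₀ hcosh (le_max_right _ _)
      have b0 : ∑ y : Fin n → Bool, Real.exp (-(lam * σ i)) * Real.exp (lam * PS σ t0 ρ0 y)
          ≤ Real.exp (-(lam * σ i)) * ((2:ℝ) ^ n * Real.cosh lam ^ max t0.depth t1.depth) := by
        rw [← Finset.mul_sum]
        refine mul_le_mul_of_nonneg_left ?_ (Real.exp_pos _).le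
        refine (ih0 ρ0).trans ?_
        refine mul_le_mul_of_nonneg_left ?_ (by positivity)
        exact pow_le_pow_right₀ hcosh (le_max_left _ _)
      have hch : Real.exp (lam * σ i) + Real.exp (-(lam * σ i)) = 2 * Real.cosh lam := by
        rcases hσ i with h | h <;>
          rw [h] <;> simp [Real.cosh_eq] <;> ring
      calc ((∑ y : Fin n → Bool, Real.exp (lam * σ i) * Real.exp (lam * PS σ t1 ρ1 y))
            + ∑ y : Fin n → Bool, Real.exp (-(lam * σ i)) * Real.exp (lam * PS σ t0 ρ0 y)) / 2
          ≤ ((Real.exp (lam * σ i) + Real.exp (-(lam * σ i)))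
              * ((2:ℝ) ^ n * Real.cosh lam ^ max t0.depth t1.depth)) / 2 := by
            rw [add_mul]
            apply div_le_div_of_nonneg_right ?_ (by norm_num)
            · exact add_le_add b1 b0
        _ = (2:ℝ) ^ n * (Real.cosh lam * Real.cosh lam ^ max t0.depth t1.depth) := by
            rw [hch]; ring
        _ = (2:ℝ) ^ n * Real.cosh lam ^ (DTree.node i t0 t1).depth := by
            rw [DTree.depth]
            rw [pow_add, pow_one]
    · obtain ⟨a, ha⟩ := Option.ne_none_iff_exists'.mp hρ
      cases a with
      | true =>
        have : ∀ y : Fin n → Bool, PS σ (DTree.node i t0 t1) ρ y = PS σ t1 ρ y := by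
          intro y; simp [PS, ha]
        simp only [this]
        refine (ih1 ρ).trans ?_
        exact mul_le_mul_of_nonneg_left (pow_le_pow_right₀ hcosh hd1) (by positivity)
      | false =>
        have : ∀ y : Fin n → Bool, PS σ (DTree.node i t0 t1) ρ y = PS σ t0 ρ y := by
          intro y; simp [PS, ha]
        simp only [this]
        refine (ih0 ρ).trans ?_
        exact mul_le_mul_of_nonneg_left (pow_le_pow_right₀ hcosh hd0) (by positivity)


lemma le_exp_div (lam v : ℝ) (hlam : 0 < lam) :
    v ≤ Real.exp (lam * v) / (Real.exp 1 * lam) := by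
  rw [le_div_iff₀ (by positivity)]
  have h := Real.add_one_le_exp (lam * v - 1)
  have h2 : Real.exp (lam * v) = Real.exp 1 * Real.exp (lam * v - 1) := by
    rw [← Real.exp_add]; ring_nf
  have h3 := mul_le_mul_of_nonneg_left h (Real.exp_pos 1).le
  rw [← h2] at h3
  nlinarith [h3]

lemma pointwise_bound (a u t0 lam : ℝ) (hlam : 0 < lam) (ha : a = 0 ∨ a = 1) :
    a * u ≤ a * t0 + Real.exp (lam * (u - t0)) / (Real.exp 1 * lam) := by
  rcases ha with h | h
  · subst h; simp; positivity
  · subst h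
    have := le_exp_div lam (u - t0) hlam
    linarith

end LevelOne

open LevelOne

set_option maxHeartbeats 1000000

/-- Level-1 inequality for decision trees:
there is a universal constant `C > 0` such that for every Boolean function
`f : {-1,1}^n → {0,1}` computed by a decision tree of depth at most `d`, with
`p = Pr[f(x) = 1] > 0`, we have `∑_{i} |f̂({i})| ≤ C·√d·p·√(ln(e/p))`. -/
theorem level_one_inequality_decision_trees :
    ∃ C : ℝ, 0 < C ∧
      ∀ (n d : ℕ) (f : (Fin n → Bool) → ℝ) (T : DTree (Fin n)),
        T.depth ≤ d → (∀ x, f x = T.eval x) →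
        0 < uavg f →
        ∑ i : Fin n, |booleanFourierCoeff f {i}| ≤
          C * Real.sqrt d * uavg f * Real.sqrt (Real.log (Real.exp 1 / uavg f)) := by
  refine ⟨3, by norm_num, ?_⟩
  intro n d f T hdepth hfT hp
  set p := uavg f with hpdef
  set σ : Fin n → ℝ := fun i => if 0 ≤ booleanFourierCoeff f {i} then 1 else -1 with hσdef
  have hσ : ∀ i, σ i = 1 ∨ σ i = -1 := by
    intro i
    by_cases h : 0 ≤ booleanFourierCoeff f {i} <;> simp [hσdef, h]
  have h2n : (0:ℝ) < 2 ^ n := by positivity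
  have hcoeff : ∀ i, booleanFourierCoeff f {i}
      = (∑ x : Fin n → Bool, f x * chi (x i)) / 2 ^ n := by
    intro i
    unfold booleanFourierCoeff
    rw [Fintype.card_fin]
    congr 1
    refine Finset.sum_congr rfl (fun x _ => ?_)
    rw [Finset.prod_singleton]
    rfl
  have habs : ∀ i, |booleanFourierCoeff f {i}| = σ i * booleanFourierCoeff f {i} := by
    intro i
    by_cases h : 0 ≤ booleanFourierCoeff f {i}
    · simp [hσdef, h, abs_of_nonneg h]
    · push_neg at h
      simp [hσdef, not_le.mpr h, abs_of_neg h]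
  set ρ₀ : Fin n → Option Bool := fun _ => none with hρ₀def
  have hpatch0 : ∀ y : Fin n → Bool, patch ρ₀ y = y := fun y => rfl
  have hLf0 : ∀ y : Fin n → Bool, Lf σ ρ₀ y = ∑ i, σ i * chi (y i) := by
    intro y; unfold Lf; simp [hρ₀def]
  have stepA : ∑ i : Fin n, |booleanFourierCoeff f {i}|
      = (∑ y : Fin n → Bool, f y * Lf σ ρ₀ y) / 2 ^ n := by
    have e1 : ∀ i : Fin n, |booleanFourierCoeff f {i}|
        = (∑ x : Fin n → Bool, σ i * (f x * chi (x i))) / 2 ^ n := by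
      intro i
      rw [habs i, hcoeff i, ← mul_div_assoc, Finset.mul_sum]
    rw [Finset.sum_congr rfl (fun i _ => e1 i), ← Finset.sum_div, Finset.sum_comm]
    congr 1
    refine Finset.sum_congr rfl (fun y _ => ?_)
    rw [hLf0 y, Finset.mul_sum]
    refine Finset.sum_congr rfl (fun i _ => by ring)
  have hfev : ∀ y : Fin n → Bool, f y = T.eval (patch ρ₀ y) := by
    intro y; rw [hpatch0]; exact hfT y
  have hf01 : ∀ x : Fin n → Bool, f x = 0 ∨ f x = 1 := by
    intro x; rw [hfT x]; exact eval01 T x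
  have hsumf : (∑ y : Fin n → Bool, f y) = p * 2 ^ n := by
    rw [hpdef]; unfold uavg; rw [Fintype.card_fin]; field_simp
  have hple1 : p ≤ 1 := by
    rw [hpdef]; unfold uavg
    rw [Fintype.card_fin, div_le_one h2n]
    have h1 : (∑ x : Fin n → Bool, f x) ≤ ∑ _x : Fin n → Bool, (1:ℝ) :=
      Finset.sum_le_sum (fun x _ => by rcases hf01 x with h | h <;> rw [h] <;> norm_num)
    simpa using h1
  rcases Nat.eq_zero_or_pos d with hd0 | hd1
  · subst hd0
    cases T with
    | node i a b => simp [DTree.depth] at hdepth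
    | leaf b =>
      cases b
      · exfalso
        have hz : uavg f = 0 := by
          unfold uavg
          rw [Finset.sum_eq_zero (fun x _ => by rw [hfT x]; simp [DTree.eval])]
          simp
        rw [← hpdef] at hz
        rw [hz] at hp
        exact lt_irrefl _ hp
      · have hz : ∀ i : Fin n, booleanFourierCoeff f {i} = 0 := by
          intro i
          have e : ∀ x : Fin n → Bool, f x * chi (x i) = chi (x i) := by
            intro x; rw [hfT x]; simp [DTree.eval, chi]
          rw [hcoeff i, Finset.sum_congr rfl (fun x _ => e x), sum_chi i, zero_div]
        simp [hz, Real.sqrt_zero]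
  · -- main case : 1 ≤ d
    have hdr : (1:ℝ) ≤ (d:ℝ) := by exact_mod_cast hd1
    have hdpos : (0:ℝ) < (d:ℝ) := by linarith
    set L0 := Real.log (Real.exp 1 / p) with hL0def
    have hL0 : 1 ≤ L0 := by
      rw [hL0def, Real.log_div (Real.exp_ne_zero 1) (ne_of_gt hp), Real.log_exp]
      have := Real.log_nonpos (le_of_lt hp) hple1
      linarith
    set t₀ := Real.sqrt (2 * d * L0) with ht₀def
    have hprod : (0:ℝ) < 2 * d * L0 := by nlinarith
    have ht₀ : 0 < t₀ := Real.sqrt_pos.mpr hprod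
    have ht₀sq : t₀ ^ 2 = 2 * d * L0 := Real.sq_sqrt hprod.le
    set lam := t₀ / d with hlamdef
    have hlam : 0 < lam := div_pos ht₀ hdpos
    have hE : (1:ℝ) ≤ Real.exp 1 := by
      have := Real.add_one_le_exp 1; linarith
    -- the core chain
    have key1 : ∑ i : Fin n, |booleanFourierCoeff f {i}|
        = (∑ y : Fin n → Bool, T.eval (patch ρ₀ y) * PS σ T ρ₀ y) / 2 ^ n := by
      rw [stepA]
      congr 1
      rw [Finset.sum_congr rfl (fun y _ => by rw [hfev y])]
      exact L1 σ T ρ₀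
    have hsum_eval : (∑ y : Fin n → Bool, T.eval (patch ρ₀ y)) = p * 2 ^ n := by
      rw [← hsumf]
      exact Finset.sum_congr rfl (fun y _ => (hfev y).symm)
    have key2 : (∑ y : Fin n → Bool, T.eval (patch ρ₀ y) * PS σ T ρ₀ y)
        ≤ t₀ * (p * 2 ^ n)
          + Real.exp (-(lam * t₀)) / (Real.exp 1 * lam)
            * ((2:ℝ) ^ n * Real.exp ((d:ℝ) * lam ^ 2 / 2)) := by
      have pb : ∀ y : Fin n → Bool,
          T.eval (patch ρ₀ y) * PS σ T ρ₀ y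
            ≤ T.eval (patch ρ₀ y) * t₀
              + Real.exp (lam * (PS σ T ρ₀ y - t₀)) / (Real.exp 1 * lam) :=
        fun y => pointwise_bound _ _ _ _ hlam (eval01 T _)
      refine (Finset.sum_le_sum (fun y _ => pb y)).trans ?_
      rw [Finset.sum_add_distrib]
      have e1 : (∑ y : Fin n → Bool, T.eval (patch ρ₀ y) * t₀) = t₀ * (p * 2 ^ n) := by
        rw [← Finset.sum_mul, hsum_eval]; ring
      have e2 : (∑ y : Fin n → Bool,
            Real.exp (lam * (PS σ T ρ₀ y - t₀)) / (Real.exp 1 * lam))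
          = Real.exp (-(lam * t₀)) / (Real.exp 1 * lam)
            * ∑ y : Fin n → Bool, Real.exp (lam * PS σ T ρ₀ y) := by
        rw [Finset.mul_sum]
        refine Finset.sum_congr rfl (fun y _ => ?_)
        rw [show lam * (PS σ T ρ₀ y - t₀) = -(lam * t₀) + lam * PS σ T ρ₀ y by ring,
          Real.exp_add]
        ring
      rw [e1, e2]
      have e3 : (∑ y : Fin n → Bool, Real.exp (lam * PS σ T ρ₀ y))
          ≤ (2:ℝ) ^ n * Real.exp ((d:ℝ) * lam ^ 2 / 2) := by
        refine (L2 σ hσ lam T ρ₀).trans ?_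
        have c1 : Real.cosh lam ^ T.depth ≤ Real.cosh lam ^ d :=
          pow_le_pow_right₀ (Real.one_le_cosh lam) hdepth
        have c2 : Real.cosh lam ^ d ≤ (Real.exp (lam ^ 2 / 2)) ^ d :=
          pow_le_pow_left₀ (Real.cosh_pos lam).le (Real.cosh_le_exp_half_sq lam) d
        have c3 : (Real.exp (lam ^ 2 / 2)) ^ d = Real.exp ((d:ℝ) * lam ^ 2 / 2) := by
          rw [← Real.exp_nat_mul]
          congr 1
          ring
        calc (2:ℝ) ^ n * Real.cosh lam ^ T.depth
            ≤ (2:ℝ) ^ n * Real.cosh lam ^ d :=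
              mul_le_mul_of_nonneg_left c1 (by positivity)
          _ ≤ (2:ℝ) ^ n * (Real.exp (lam ^ 2 / 2)) ^ d :=
              mul_le_mul_of_nonneg_left c2 (by positivity)
          _ = (2:ℝ) ^ n * Real.exp ((d:ℝ) * lam ^ 2 / 2) := by rw [c3]
      exact add_le_add le_rfl (mul_le_mul_of_nonneg_left e3 (by positivity))
    -- numeric simplification of the second term
    have hnum : Real.exp (-(lam * t₀)) * Real.exp ((d:ℝ) * lam ^ 2 / 2)
        = p / Real.exp 1 := by
      rw [← Real.exp_add]
      have harg : -(lam * t₀) + (d:ℝ) * lam ^ 2 / 2 = -L0 := by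
        rw [hlamdef]
        field_simp
        nlinarith [ht₀sq]
      rw [harg, Real.exp_neg, hL0def, Real.exp_log (by positivity)]
      field_simp
    have hterm : Real.exp (-(lam * t₀)) / (Real.exp 1 * lam)
          * ((2:ℝ) ^ n * Real.exp ((d:ℝ) * lam ^ 2 / 2))
        = p / (Real.exp 1 ^ 2 * lam) * 2 ^ n := by
      calc Real.exp (-(lam * t₀)) / (Real.exp 1 * lam)
            * ((2:ℝ) ^ n * Real.exp ((d:ℝ) * lam ^ 2 / 2))
          = (Real.exp (-(lam * t₀)) * Real.exp ((d:ℝ) * lam ^ 2 / 2)) * 2 ^ n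
              / (Real.exp 1 * lam) := by ring
        _ = (p / Real.exp 1) * 2 ^ n / (Real.exp 1 * lam) := by rw [hnum]
        _ = p / (Real.exp 1 ^ 2 * lam) * 2 ^ n := by
            field_simp
    have key3 : ∑ i : Fin n, |booleanFourierCoeff f {i}|
        ≤ t₀ * p + p / (Real.exp 1 ^ 2 * lam) := by
      rw [key1, div_le_iff₀ h2n]
      calc (∑ y : Fin n → Bool, T.eval (patch ρ₀ y) * PS σ T ρ₀ y)
          ≤ t₀ * (p * 2 ^ n)
            + Real.exp (-(lam * t₀)) / (Real.exp 1 * lam)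
              * ((2:ℝ) ^ n * Real.exp ((d:ℝ) * lam ^ 2 / 2)) := key2
        _ = (t₀ * p + p / (Real.exp 1 ^ 2 * lam)) * 2 ^ n := by rw [hterm]; ring
    have hstep1 : p / (Real.exp 1 ^ 2 * lam) ≤ p * t₀ / 2 := by
      have h1 : 1 / lam = (d:ℝ) / t₀ := by
        rw [hlamdef, one_div_div]
      have hdle : (d:ℝ) / t₀ ≤ t₀ / 2 := by
        rw [div_le_div_iff₀ ht₀ (by norm_num)]
        nlinarith [ht₀sq, hL0, hdpos]
      have hE2 : (1:ℝ) ≤ Real.exp 1 ^ 2 := by nlinarith [hE]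
      have hElam : lam ≤ Real.exp 1 ^ 2 * lam := by
        calc lam = 1 * lam := (one_mul _).symm
          _ ≤ Real.exp 1 ^ 2 * lam := mul_le_mul_of_nonneg_right hE2 hlam.le
      calc p / (Real.exp 1 ^ 2 * lam) = p * (Real.exp 1 ^ 2 * lam)⁻¹ := by
            rw [div_eq_mul_inv]
        _ ≤ p * lam⁻¹ :=
            mul_le_mul_of_nonneg_left (inv_anti₀ hlam hElam) hp.le
        _ = p * (1 / lam) := by rw [one_div]
        _ = p * ((d:ℝ) / t₀) := by rw [h1]
        _ ≤ p * (t₀ / 2) := mul_le_mul_of_nonneg_left hdle hp.le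
        _ = p * t₀ / 2 := by ring
    have hsqrt2 : Real.sqrt 2 ≤ 2 := by
      nlinarith [Real.sq_sqrt (by norm_num : (0:ℝ) ≤ 2), Real.sqrt_nonneg 2]
    have ht₀eq : t₀ = Real.sqrt 2 * Real.sqrt d * Real.sqrt L0 := by
      rw [ht₀def, Real.sqrt_mul (by positivity), Real.sqrt_mul (by norm_num)]
    calc ∑ i : Fin n, |booleanFourierCoeff f {i}|
        ≤ t₀ * p + p / (Real.exp 1 ^ 2 * lam) := key3
      _ ≤ t₀ * p + p * t₀ / 2 := by linarith
      _ = (3 / 2) * (p * t₀) := by ring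
      _ ≤ 3 * Real.sqrt d * p * Real.sqrt L0 := by
          rw [ht₀eq]
          have hX : 0 ≤ p * (Real.sqrt (d:ℝ) * Real.sqrt L0) := by positivity
          nlinarith [mul_nonneg (by linarith : (0:ℝ) ≤ 2 - Real.sqrt 2) hX]
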